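/- For the imbalanced Kendall kernel with i.i.d. N(0,1) arguments, the projection onto one control observation is h_{1,0}(x) = E[sgn(X^{(1)} − (x + Σ_{k=2}^m X_k^{(0)})/m)] and its variance equals ξ_{1,0} = ∫_ℝ (1 − 2Φ((m^2 + m − 1)^{-1/2} x))^2 φ(x) dx. -/

import Mathlib

open MeasureTheory ProbabilityTheory

open Real Set
open scoped NNReal ENNReal

lemma pdf_conv (a b : ℝ≥0) (ha : a ≠ 0) (hb : b ≠ 0) (z : ℝ) :
    ∫ x : ℝ, gaussianPDFReal 0 a x * gaussianPDFReal 0 b (z - x) =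
      gaussianPDFReal 0 (a + b) z := by
  have hA : (0:ℝ) < a := by positivity
  have hB : (0:ℝ) < b := by positivity
  set A := (a:ℝ) with hAdef; set B := (b:ℝ) with hBdef
  have hAB : (0:ℝ) < A + B := by linarith
  have hk : (0:ℝ) < (A + B) / (2 * A * B) := by positivity
  set k : ℝ := (A + B) / (2 * A * B) with hkdef
  set c : ℝ := A * z / (A + B) with hcdef
  have key : ∀ x : ℝ, gaussianPDFReal 0 a x * gaussianPDFReal 0 b (z - x)
      = ((√(2 * π * A))⁻¹ * (√(2 * π * B))⁻¹ * rexp (- z ^ 2 / (2 * (A + B))))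
        * rexp (-k * (x - c) ^ 2) := by
    intro x
    simp only [gaussianPDFReal, sub_zero, ← hAdef, ← hBdef]
    rw [mul_mul_mul_comm, mul_assoc ((√(2 * π * A))⁻¹ * (√(2 * π * B))⁻¹), ← Real.exp_add,
      ← Real.exp_add]
    congr 1
    congr 1
    rw [hkdef, hcdef]
    field_simp
    ring
  rw [integral_congr_ae (ae_of_all _ key), integral_const_mul,
    integral_sub_right_eq_self (fun y => rexp (-k * y ^ 2)) c]
  rw [integral_gaussian]
  have hconst : (√(2 * π * A))⁻¹ * (√(2 * π * B))⁻¹ * √(π / k) = (√(2 * π * (A + B)))⁻¹ := by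
    rw [← Real.sqrt_inv, ← Real.sqrt_inv, ← Real.sqrt_mul (by positivity),
      ← Real.sqrt_mul (by positivity), ← Real.sqrt_inv]
    congr 1
    rw [hkdef]
    field_simp
  rw [mul_right_comm, hconst, gaussianPDFReal]
  push_cast
  rw [sub_zero]

lemma gaussian_conv (a b : ℝ≥0) (ha : a ≠ 0) (hb : b ≠ 0) :
    Measure.map (fun p : ℝ × ℝ => p.1 + p.2) ((gaussianReal 0 a).prod (gaussianReal 0 b)) =
      gaussianReal 0 (a + b) := by
  have hab : a + b ≠ 0 := by simp [ha]
  refine Measure.ext_of_Iic _ _ fun t => ?_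
  have hmadd : Measurable fun p : ℝ × ℝ => p.1 + p.2 := measurable_add
  rw [Measure.map_apply hmadd measurableSet_Iic,
    Measure.prod_apply (hmadd measurableSet_Iic)]
  have hpre : ∀ x : ℝ, (Prod.mk x ⁻¹' ((fun p : ℝ × ℝ => p.1 + p.2) ⁻¹' Iic t)) = Iic (t - x) := by
    intro x; ext y; simp [add_comm, ← sub_eq_iff_eq_add, le_sub_iff_add_le']
  simp_rw [hpre]
  -- translate: ν (Iic (t - x)) = ∫⁻ z in Iic t, pdf_b (z - x)
  have h2 : ∀ x : ℝ, gaussianReal 0 b (Iic (t - x))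
      = ∫⁻ z in Iic t, gaussianPDF 0 b (z - x) ∂volume := by
    intro x
    rw [gaussianReal_apply 0 hb, ← lintegral_indicator measurableSet_Iic,
      ← lintegral_indicator measurableSet_Iic,
      ← lintegral_sub_right_eq_self ((Iic (t - x)).indicator (gaussianPDF 0 b)) x]
    congr 1
    ext z
    by_cases hz : z ≤ t
    · rw [indicator_of_mem (by simpa using hz), indicator_of_mem (by simp [sub_le_sub_iff_right, hz])]
    · rw [indicator_of_notMem (by simpa using hz),
        indicator_of_notMem (by simp [sub_le_sub_iff_right]; simpa using hz)]
  simp_rw [h2]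
  rw [gaussianReal_of_var_ne_zero 0 ha,
    lintegral_withDensity_eq_lintegral_mul _ (measurable_gaussianPDF 0 a)
      (g := fun x => ∫⁻ z in Iic t, gaussianPDF 0 b (z - x))
      (Measurable.lintegral_prod_right
        ((measurable_gaussianPDF 0 b).comp (measurable_snd.sub measurable_fst)))]
  simp only [Pi.mul_apply]
  have hpull : ∀ x : ℝ, gaussianPDF 0 a x * ∫⁻ z in Iic t, gaussianPDF 0 b (z - x)
      = ∫⁻ z in Iic t, gaussianPDF 0 a x * gaussianPDF 0 b (z - x) := fun x =>
    (lintegral_const_mul _ ((measurable_gaussianPDF 0 b).comp (measurable_id.sub_const x))).symm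
  simp_rw [hpull]
  rw [lintegral_lintegral_swap
    (((measurable_gaussianPDF 0 a).comp measurable_fst).mul
      ((measurable_gaussianPDF 0 b).comp (measurable_snd.sub measurable_fst))).aemeasurable]
  have hble : ∀ x : ℝ, gaussianPDFReal 0 a x ≤ (√(2 * π * a))⁻¹ := by
    intro x
    rw [gaussianPDFReal]
    have h1 : rexp (-(x - 0) ^ 2 / (2 * a)) ≤ 1 := by
      rw [Real.exp_le_one_iff, neg_div, neg_nonpos]
      exact div_nonneg (sq_nonneg _) (by positivity)
    calc (√(2 * π * a))⁻¹ * rexp (-(x - 0) ^ 2 / (2 * a))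
        ≤ (√(2 * π * a))⁻¹ * 1 := mul_le_mul_of_nonneg_left h1 (by positivity)
      _ = (√(2 * π * a))⁻¹ := mul_one _
  have h3 : ∀ z : ℝ, ∫⁻ x, gaussianPDF 0 a x * gaussianPDF 0 b (z - x) ∂volume
      = gaussianPDF 0 (a + b) z := by
    intro z
    simp_rw [gaussianPDF, ← ENNReal.ofReal_mul (gaussianPDFReal_nonneg 0 a _)]
    rw [← ofReal_integral_eq_lintegral_ofReal ?hint
      (ae_of_all _ fun x => mul_nonneg (gaussianPDFReal_nonneg 0 a x)
        (gaussianPDFReal_nonneg 0 b _)), pdf_conv a b ha hb z]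
    case hint =>
      refine Integrable.bdd_mul (c := (√(2 * π * a))⁻¹) ?_ (measurable_gaussianPDFReal 0 a).aestronglyMeasurable
        (ae_of_all _ fun x => ?_)
      · exact (integrable_gaussianPDFReal 0 b).comp_sub_left z
      · rw [Real.norm_of_nonneg (gaussianPDFReal_nonneg 0 a x)]
        exact hble x
  simp_rw [h3]
  rw [gaussianReal_apply 0 hab]

lemma gaussian_conv' (a b : ℝ≥0) (ha : a ≠ 0) :
    Measure.map (fun p : ℝ × ℝ => p.1 + p.2) ((gaussianReal 0 a).prod (gaussianReal 0 b)) =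
      gaussianReal 0 (a + b) := by
  rcases eq_or_ne b 0 with rfl | hb
  · rw [gaussianReal_zero_var, Measure.prod_dirac, Measure.map_map measurable_add (by fun_prop)]
    simp only [Function.comp_def, add_zero]
    rw [Measure.map_id']
  · exact gaussian_conv a b ha hb

lemma gaussian_sum (n : ℕ) :
    Measure.map (fun p : Fin n → ℝ => ∑ i, p i)
      (Measure.pi fun _ : Fin n => gaussianReal 0 1) = gaussianReal 0 n := by
  induction n with
  | zero =>
    simp only [Finset.univ_eq_empty, Finset.sum_empty, Nat.cast_zero, gaussianReal_zero_var]
    rw [Measure.map_const]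
    simp
  | succ n ih =>
    have hmp := measurePreserving_piFinSuccAbove (fun _ : Fin (n + 1) => gaussianReal 0 1) 0
    have hsum : (fun p : Fin (n + 1) → ℝ => ∑ i, p i)
        = (fun q : ℝ × (Fin n → ℝ) => q.1 + ∑ j, q.2 j)
          ∘ (MeasurableEquiv.piFinSuccAbove (fun _ : Fin (n + 1) => ℝ) 0) := by
      ext p
      simp [MeasurableEquiv.piFinSuccAbove, Fin.sum_univ_succAbove p 0, Fin.tail]
    rw [hsum, ← Measure.map_map (by fun_prop) (MeasurableEquiv.measurable _), hmp.map_eq]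
    have hdec : (fun q : ℝ × (Fin n → ℝ) => q.1 + ∑ j, q.2 j)
        = (fun r : ℝ × ℝ => r.1 + r.2) ∘ (Prod.map id (fun v : Fin n → ℝ => ∑ j, v j)) := rfl
    have hms : Measurable (fun v : Fin n → ℝ => ∑ j, v j) :=
      Finset.univ.measurable_sum fun i _ => measurable_pi_apply i
    rw [hdec, ← Measure.map_map measurable_add (measurable_id.prodMap hms),
      ← Measure.map_prod_map _ _ measurable_id hms, Measure.map_id, ih,
      gaussian_conv' 1 n one_ne_zero]
    congr 1
    push_cast
    ring

lemma measurable_realSign : Measurable Real.sign := by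
  have : Real.sign = fun r : ℝ => if r < 0 then (-1:ℝ) else if 0 < r then 1 else 0 := rfl
  rw [this]
  exact Measurable.ite measurableSet_Iio measurable_const
    (Measurable.ite measurableSet_Ioi measurable_const measurable_const)

lemma sign_eq_indicator (y : ℝ) :
    Real.sign y = (Ioi (0:ℝ)).indicator (fun _ => (1:ℝ)) y
      - (Iio (0:ℝ)).indicator (fun _ => (1:ℝ)) y := by
  rcases lt_trichotomy y 0 with h | rfl | h
  · rw [Real.sign_of_neg h, indicator_of_notMem (by simpa using h.le),
      indicator_of_mem (by simpa using h)]
    norm_num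
  · simp
  · rw [Real.sign_of_pos h, indicator_of_mem (by simpa using h),
      indicator_of_notMem (by simpa using h.le)]
    norm_num

lemma integral_sign (μ : Measure ℝ) [IsProbabilityMeasure μ] (h0 : μ {(0:ℝ)} = 0) :
    ∫ y, Real.sign y ∂μ = 1 - 2 * cdf μ 0 := by
  rw [integral_congr_ae (ae_of_all _ sign_eq_indicator), integral_sub
    ((integrable_const (1:ℝ)).indicator measurableSet_Ioi)
    ((integrable_const (1:ℝ)).indicator measurableSet_Iio),
    integral_indicator_const _ measurableSet_Ioi, integral_indicator_const _ measurableSet_Iio]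
  have hIio : μ (Iio 0) = μ (Iic 0) := by
    rw [← Iio_union_right, measure_union (by simp) (measurableSet_singleton _), h0, add_zero]
  have hIoi : μ (Ioi 0) = 1 - μ (Iic 0) := by
    rw [← measure_univ (μ := μ), ← Iic_union_Ioi (a := (0:ℝ)),
      measure_union (Iic_disjoint_Ioi le_rfl) measurableSet_Ioi]
    rw [ENNReal.add_sub_cancel_left (measure_ne_top μ _)]
  rw [cdf_eq_real]
  simp only [measureReal_def, smul_eq_mul, mul_one, hIoi, hIio]
  rw [ENNReal.toReal_sub_of_le prob_le_one (by simp)]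
  simp only [ENNReal.toReal_one]
  ring

lemma gaussianReal_eq_map (c : ℝ) (v : ℝ≥0) :
    gaussianReal c v = Measure.map (fun y => (√v) * y + c) (gaussianReal 0 1) := by
  have h1 : Measure.map (fun y => (√v) * y) (gaussianReal 0 1) = gaussianReal 0 v := by
    rw [show (fun y : ℝ => (√v) * y) = fun y : ℝ => (√v) * y from rfl,
      gaussianReal_map_const_mul]
    congr
    · ring
    · ext
      simp [Real.sq_sqrt v.2]
  have : (fun y : ℝ => (√v) * y + c) = (fun y => y + c) ∘ (fun y => (√v) * y) := rfl
  rw [this, ← Measure.map_map (measurable_add_const c) (measurable_const_mul _), h1,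
    gaussianReal_map_add_const c, zero_add]

lemma cdf_gaussianReal (c : ℝ) (v : ℝ≥0) (hv : v ≠ 0) (t : ℝ) :
    cdf (gaussianReal c v) t = cdf (gaussianReal 0 1) ((t - c) / √v) := by
  have hsv : (0:ℝ) < √v := Real.sqrt_pos.2 (by positivity)
  rw [cdf_eq_real, cdf_eq_real, measureReal_def, measureReal_def, gaussianReal_eq_map c v,
    Measure.map_apply (by fun_prop) measurableSet_Iic]
  have hpre : (fun y : ℝ => (√v) * y + c) ⁻¹' Iic t = Iic ((t - c) / √v) := by
    ext y
    simp only [mem_preimage, mem_Iic]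
    rw [le_div_iff₀ hsv, mul_comm]
    constructor <;> intro h <;> linarith
  rw [hpre]

lemma cdf_std_neg (u : ℝ) :
    cdf (gaussianReal 0 1) (-u) = 1 - cdf (gaussianReal 0 1) u := by
  have h0 : gaussianReal 0 1 {u} = 0 :=
    gaussianReal_absolutelyContinuous 0 one_ne_zero (measure_singleton u)
  have hmap : Measure.map (fun x : ℝ => -x) (gaussianReal 0 1) = gaussianReal 0 1 := by
    rw [show (fun x : ℝ => -x) = fun x : ℝ => (-1 : ℝ) * x by ext; ring,
      gaussianReal_map_const_mul]
    norm_num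
  rw [cdf_eq_real, cdf_eq_real, measureReal_def, measureReal_def]
  conv_lhs => rw [← hmap]
  rw [Measure.map_apply measurable_neg measurableSet_Iic]
  have hpre : (fun x : ℝ => -x) ⁻¹' Iic (-u) = Ici u := by
    ext y; simp
  rw [hpre, show Ici u = (Iio u)ᶜ by simp [compl_Iio],
    measure_compl measurableSet_Iio (measure_ne_top _ _), measure_univ,
    show (gaussianReal 0 1) (Iio u) = (gaussianReal 0 1) (Iic u) by
      rw [← Iio_union_right, measure_union (by simp) (measurableSet_singleton _), h0, add_zero],
    ENNReal.toReal_sub_of_le prob_le_one (by simp)]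
  simp

lemma gaussian_neg : Measure.map (fun x : ℝ => -x) (gaussianReal 0 1) = gaussianReal 0 1 := by
  rw [show (fun x : ℝ => -x) = fun x : ℝ => (-1 : ℝ) * x by ext; ring,
    gaussianReal_map_const_mul]
  norm_num

/-- for the imbalanced Kendall kernel with i.i.d. `N(0,1)` arguments, the
projection onto one control observation,
`h_{1,0}(x) = E[sgn(X¹ - (x + Σ_{k=2}^m X_k⁰)/m)]`, has variance
`ξ_{1,0} = ∫ (1 - 2Φ((m² + m - 1)^{-1/2} x))² φ(x) dx`. -/
theorem imbalanced_kendall_xi10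
    (m : ℕ) (hm : 0 < m) :
    (∫ x, (∫ p : ℝ × (Fin (m - 1) → ℝ),
          Real.sign (p.1 - (x + ∑ k, p.2 k) / m)
        ∂((gaussianReal 0 1).prod (Measure.pi fun _ : Fin (m - 1) => gaussianReal 0 1))) ^ 2
        ∂(gaussianReal 0 1)) -
    (∫ x, (∫ p : ℝ × (Fin (m - 1) → ℝ),
          Real.sign (p.1 - (x + ∑ k, p.2 k) / m)
        ∂((gaussianReal 0 1).prod (Measure.pi fun _ : Fin (m - 1) => gaussianReal 0 1)))
        ∂(gaussianReal 0 1)) ^ 2 =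
    ∫ x : ℝ, (1 - 2 * cdf (gaussianReal 0 1)
        ((Real.sqrt ((m : ℝ) ^ 2 + m - 1))⁻¹ * x)) ^ 2 * gaussianPDFReal 0 1 x := by
  have hm0 : (0:ℝ) < m := Nat.cast_pos.2 hm
  have hm1 : (1:ℝ) ≤ m := Nat.one_le_cast.2 hm
  have hS : (0:ℝ) < (m:ℝ)^2 + m - 1 := by nlinarith
  set K : ℝ := (Real.sqrt ((m : ℝ) ^ 2 + m - 1))⁻¹ with hKdef
  set G : ℝ → ℝ := fun x => 1 - 2 * cdf (gaussianReal 0 1) (K * x) with hGdef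
  set c : ℝ := -(1 / (m:ℝ)) with hcdef
  set v : ℝ≥0 := 1 + ⟨c^2, sq_nonneg c⟩ * ((m - 1 : ℕ) : ℝ≥0) with hvdef
  have hv : v ≠ 0 := by
    simp [hvdef, add_eq_zero]
  have hms : Measurable fun w : Fin (m - 1) → ℝ => ∑ k, w k :=
    Finset.univ.measurable_sum fun i _ => measurable_pi_apply i
  have hveq : (v:ℝ) = ((m:ℝ)^2 + m - 1) / (m:ℝ)^2 := by
    rw [hvdef]
    show (1:ℝ) + c ^ 2 * ((m - 1 : ℕ) : ℝ) = _
    rw [Nat.cast_sub hm, Nat.cast_one, hcdef]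
    field_simp
    ring
  have hsqrt : √(v:ℝ) = √((m:ℝ)^2 + m - 1) / m := by
    rw [hveq, Real.sqrt_div hS.le, Real.sqrt_sq hm0.le]
  have harg : ∀ x : ℝ, (0 - (0 + -(x / (m:ℝ)))) / √(v:ℝ) = K * x := by
    intro x
    have h1 : √((m:ℝ)^2 + m - 1) ≠ 0 := by positivity
    rw [hsqrt, hKdef]
    field_simp
    ring
  have hmapT : ∀ x : ℝ, Measure.map
      (fun p : ℝ × (Fin (m - 1) → ℝ) => p.1 - (x + ∑ k, p.2 k) / m)
      ((gaussianReal 0 1).prod (Measure.pi fun _ : Fin (m - 1) => gaussianReal 0 1))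
      = gaussianReal (0 + -(x / m)) v := by
    intro x
    have hfeq : (fun p : ℝ × (Fin (m - 1) → ℝ) => p.1 - (x + ∑ k, p.2 k) / (m:ℝ))
        = (fun y : ℝ => y + -(x / m)) ∘ ((fun r : ℝ × ℝ => r.1 + r.2)
          ∘ ((Prod.map id fun s : ℝ => c * s)
            ∘ (Prod.map (id : ℝ → ℝ) fun w : Fin (m - 1) → ℝ => ∑ k, w k))) := by
      ext p
      simp only [Function.comp_apply, Prod.map_apply, Prod.map_fst, Prod.map_snd, id_eq, hcdef]
      field_simp
      ring
    rw [hfeq,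
      ← Measure.map_map (measurable_add_const _)
        (measurable_add.comp ((measurable_id.prodMap (measurable_const_mul c)).comp
          (measurable_id.prodMap hms))),
      ← Measure.map_map measurable_add
        ((measurable_id.prodMap (measurable_const_mul c)).comp (measurable_id.prodMap hms)),
      ← Measure.map_map (measurable_id.prodMap (measurable_const_mul c))
        (measurable_id.prodMap hms),
      ← Measure.map_prod_map _ _ measurable_id hms, Measure.map_id, gaussian_sum,
      ← Measure.map_prod_map _ _ measurable_id (measurable_const_mul c), Measure.map_id,
      gaussianReal_map_const_mul, mul_zero, gaussian_conv' 1 _ one_ne_zero,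
      gaussianReal_map_add_const]
    rfl
  have hinner : ∀ x : ℝ, (∫ p : ℝ × (Fin (m - 1) → ℝ),
      Real.sign (p.1 - (x + ∑ k, p.2 k) / m)
      ∂((gaussianReal 0 1).prod (Measure.pi fun _ : Fin (m - 1) => gaussianReal 0 1))) = G x := by
    intro x
    have hT : Measurable fun p : ℝ × (Fin (m - 1) → ℝ) => p.1 - (x + ∑ k, p.2 k) / (m:ℝ) :=
      measurable_fst.sub ((measurable_const.add (hms.comp measurable_snd)).div_const _)
    have h1 := integral_map
      (μ := (gaussianReal 0 1).prod (Measure.pi fun _ : Fin (m - 1) => gaussianReal 0 1))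
      (f := Real.sign) hT.aemeasurable measurable_realSign.aestronglyMeasurable
    rw [hmapT x] at h1
    rw [← h1, integral_sign _ (gaussianReal_absolutelyContinuous _ hv (measure_singleton 0)),
      cdf_gaussianReal _ _ hv, harg x]
  have hGmeas : Measurable G := by
    have h1 : Measurable fun x : ℝ => cdf (gaussianReal 0 1) (K * x) :=
      ((cdf (gaussianReal 0 1)).mono.measurable).comp (measurable_const_mul K)
    exact measurable_const.sub (h1.const_mul 2)
  have hGbd : ∀ x : ℝ, ‖G x‖ ≤ 1 := by
    intro x
    have h1 := cdf_nonneg (gaussianReal 0 1) (K * x)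
    have h2 := cdf_le_one (gaussianReal 0 1) (K * x)
    rw [Real.norm_eq_abs, abs_le]
    simp only [hGdef]
    constructor <;> linarith
  have hodd : ∀ x : ℝ, G (-x) = - G x := by
    intro x
    simp only [hGdef]
    rw [show K * -x = -(K * x) by ring, cdf_std_neg]
    ring
  have hGzero : ∫ x, G x ∂(gaussianReal 0 1) = 0 := by
    have h1 := integral_map (φ := fun x : ℝ => -x) (f := G) measurable_neg.aemeasurable
      (by rw [gaussian_neg]; exact hGmeas.aestronglyMeasurable)
    rw [gaussian_neg] at h1
    have h2 : ∫ x, G (-x) ∂(gaussianReal 0 1) = - ∫ x, G x ∂(gaussianReal 0 1) := by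
      rw [← integral_neg]
      exact integral_congr_ae (ae_of_all _ hodd)
    rw [h2] at h1
    linarith
  have hfinal : ∫ x, G x ^ 2 ∂(gaussianReal 0 1)
      = ∫ x : ℝ, (1 - 2 * cdf (gaussianReal 0 1) (K * x)) ^ 2 * gaussianPDFReal 0 1 x := by
    have heq : gaussianPDF 0 1 = fun x => ((gaussianPDFReal 0 1 x).toNNReal : ℝ≥0∞) := rfl
    conv_lhs => rw [gaussianReal_of_var_ne_zero 0 one_ne_zero, heq]
    rw [integral_withDensity_eq_integral_smul
      ((measurable_gaussianPDFReal 0 1).real_toNNReal) (fun x => G x ^ 2)]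
    refine integral_congr_ae (ae_of_all _ fun x => ?_)
    show (gaussianPDFReal 0 1 x).toNNReal • G x ^ 2
      = (1 - 2 * cdf (gaussianReal 0 1) (K * x)) ^ 2 * gaussianPDFReal 0 1 x
    rw [NNReal.smul_def, Real.coe_toNNReal _ (gaussianPDFReal_nonneg 0 1 x), smul_eq_mul,
      mul_comm]
  have e1 : (∫ x, (∫ p : ℝ × (Fin (m - 1) → ℝ),
      Real.sign (p.1 - (x + ∑ k, p.2 k) / m)
      ∂((gaussianReal 0 1).prod (Measure.pi fun _ : Fin (m - 1) => gaussianReal 0 1))) ^ 2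
      ∂(gaussianReal 0 1)) = ∫ x, G x ^ 2 ∂(gaussianReal 0 1) :=
    integral_congr_ae (ae_of_all _ fun x => congrArg (fun r : ℝ => r ^ 2) (hinner x))
  have e2 : (∫ x, (∫ p : ℝ × (Fin (m - 1) → ℝ),
      Real.sign (p.1 - (x + ∑ k, p.2 k) / m)
      ∂((gaussianReal 0 1).prod (Measure.pi fun _ : Fin (m - 1) => gaussianReal 0 1)))
      ∂(gaussianReal 0 1)) = ∫ x, G x ∂(gaussianReal 0 1) :=
    integral_congr_ae (ae_of_all _ hinner)
  rw [e1, e2, hGzero, hfinal]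
  ring
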